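/- Let Δ₊ be the bounded self-adjoint operator on ℓ²(ℕ; ℂ) defined by (Δ₊u)(n) = u(n+1) + u(n−1) for n ≥ 1 and (Δ₊u)(0) = u(1). Then the spectrum of Δ₊ contains the closed interval [−2, 2]. -/

import Mathlib

set_option maxHeartbeats 1000000

open Complex

noncomputable section

lemma pairLB' (θ t : ℝ) : Real.sin θ ^ 2 / 4 ≤ Real.sin t ^ 2 + Real.sin (t + θ) ^ 2 := by
  set a := Real.sin t
  set b := Real.sin (t+θ)
  set s := Real.sin θ
  set c := Real.cos θ
  have h1 : (a * s)^2 + (Real.cos t * s)^2 = s^2 := by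
    linear_combination (s^2) * (Real.sin_sq_add_cos_sq t)
  have h2 : Real.cos t * s = b - a * c := by
    have hb := Real.sin_add t θ; linarith [hb]
  have h3 : (b - a*c)^2 ≤ 2*b^2 + 2*(a*c)^2 := by nlinarith [sq_nonneg (b + a*c)]
  have h4 : (a*s)^2 + 2*(a*c)^2 ≤ 2*a^2 := by
    nlinarith [Real.sin_sq_add_cos_sq θ, sq_nonneg a, sq_nonneg (a*s)]
  rw [h2] at h1
  nlinarith [h1, h3, h4]

lemma sumLB' (θ : ℝ) (M : ℕ) :
    (M:ℝ) * (Real.sin θ ^ 2 / 4) ≤ ∑ n ∈ Finset.range (2*M), Real.sin (((n:ℝ)+1)*θ) ^ 2 := by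
  induction M with
  | zero => simp
  | succ M ih =>
    have h2 : 2*(M+1) = (2*M)+1+1 := by ring
    rw [h2, Finset.sum_range_succ, Finset.sum_range_succ]
    have e1 : (((2*M+1:ℕ):ℝ)+1)*θ = (((2*M:ℕ):ℝ)+1)*θ + θ := by push_cast; ring
    rw [e1]
    have hp := pairLB' θ ((((2*M:ℕ):ℝ)+1)*θ)
    push_cast at ih hp ⊢
    linarith [hp, ih]

lemma coord_sum_single (c : ℕ → ℂ) (s : Finset ℕ) (n : ℕ) :
    (∑ k ∈ s, lp.single 2 k (c k) : lp (fun _ : ℕ => ℂ) 2) n = if n ∈ s then c n else 0 := by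
  rw [lp.coeFn_sum, Finset.sum_apply]
  simp [lp.single_apply]

lemma single_app (i : ℕ) (a : ℂ) (j : ℕ) :
    (lp.single 2 i a : lp (fun _ : ℕ => ℂ) 2) j = if j = i then a else 0 := by
  have := coord_sum_single (fun _ => a) {i} j
  simpa using this

lemma core_Ioo
    (Δp : lp (fun _ : ℕ => ℂ) 2 →L[ℂ] lp (fun _ : ℕ => ℂ) 2)
    (hΔp : ∀ (u : lp (fun _ : ℕ => ℂ) 2) (n : ℕ),
      Δp u n = if n = 0 then u 1 else u (n + 1) + u (n - 1))
    (x : ℝ) (hx : x ∈ Set.Ioo (-2 : ℝ) 2) : (x : ℂ) ∈ spectrum ℂ Δp := by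
  obtain ⟨hx1, hx2⟩ := hx
  by_contra hcon
  rw [spectrum.notMem_iff] at hcon
  obtain ⟨B, hB⟩ := hcon
  set C := ‖(↑B⁻¹ : lp (fun _ : ℕ => ℂ) 2 →L[ℂ] lp (fun _ : ℕ => ℂ) 2)‖ with hC
  have hCnn : 0 ≤ C := norm_nonneg _
  have hbound : ∀ v : lp (fun _ : ℕ => ℂ) 2, ‖v‖ ≤ C * ‖(x:ℂ) • v - Δp v‖ := by
    intro v
    have h1 : (↑B⁻¹ : lp (fun _ : ℕ => ℂ) 2 →L[ℂ] _) ((↑B : lp (fun _ : ℕ => ℂ) 2 →L[ℂ] _) v) = v := by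
      rw [← ContinuousLinearMap.mul_apply, B.inv_mul]
      simp
    have h2 : (↑B : lp (fun _ : ℕ => ℂ) 2 →L[ℂ] _) v = (x:ℂ) • v - Δp v := by
      rw [hB]
      simp [ContinuousLinearMap.sub_apply, Algebra.algebraMap_eq_smul_one]
      rfl
    have h3 := ContinuousLinearMap.le_opNorm
      (↑B⁻¹ : lp (fun _ : ℕ => ℂ) 2 →L[ℂ] lp (fun _ : ℕ => ℂ) 2)
      ((↑B : lp (fun _ : ℕ => ℂ) 2 →L[ℂ] lp (fun _ : ℕ => ℂ) 2) v)
    rw [h1, h2] at h3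
    exact h3
  -- set up θ
  set θ := Real.arccos (x/2) with hθ
  have hcos : Real.cos θ = x/2 := Real.cos_arccos (by linarith) (by linarith)
  have hsin : 0 < Real.sin θ := by
    apply Real.sin_pos_of_pos_of_lt_pi
    · exact Real.arccos_pos.mpr (by linarith)
    · refine lt_of_le_of_ne (Real.arccos_le_pi _) ?_
      intro h
      have hcpi : Real.cos θ = -1 := by rw [h, Real.cos_pi]
      rw [hcos] at hcpi; linarith
  set c : ℕ → ℝ := fun k => Real.sin (k*θ) with hc
  have hrec : ∀ n : ℕ, c (n+2) + c n = x * c (n+1) := by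
    intro n
    have e2 : ((n+2:ℕ):ℝ)*θ = ((n+1:ℕ):ℝ)*θ + θ := by push_cast; ring
    have e0 : ((n:ℕ):ℝ)*θ = ((n+1:ℕ):ℝ)*θ - θ := by push_cast; ring
    simp only [hc, e2, e0, Real.sin_add, Real.sin_sub, hcos]
    ring
  have hrecC : ∀ n : ℕ, (c (n+2) : ℂ) + c n = (x:ℂ) * c (n+1) := by
    intro n; exact_mod_cast congrArg (fun r : ℝ => (r:ℂ)) (hrec n)
  have habs : ∀ k : ℕ, ‖(c k : ℂ)‖ ≤ 1 := by
    intro k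
    rw [Complex.norm_real]
    exact abs_le.mpr ⟨Real.neg_one_le_sin _, Real.sin_le_one _⟩
  set δ := Real.sin θ ^ 2 / 4 with hδ
  have hδpos : 0 < δ := by positivity
  -- the key estimate for each M
  have key : ∀ M : ℕ, ((M+1:ℕ):ℝ) * δ ≤ 4 * C^2 := by
    intro M
    set v : lp (fun _ : ℕ => ℂ) 2 :=
      ∑ k ∈ Finset.range (2*M+2), lp.single 2 k ((c (k+1) : ℂ)) with hvdef
    have hv : ∀ n, v n = if n < 2*M+2 then (c (n+1) : ℂ) else 0 := by
      intro n
      rw [hvdef, coord_sum_single]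
      simp [Finset.mem_range]
    -- error vector
    have herr : (x:ℂ) • v - Δp v =
        lp.single 2 (2*M+1) ((c (2*M+3) : ℂ)) + lp.single 2 (2*M+2) (-(c (2*M+2) : ℂ)) := by
      apply lp.ext
      funext n
      have hL : ((x:ℂ) • v - Δp v : lp (fun _ : ℕ => ℂ) 2) n = (x:ℂ) * v n - Δp v n := by
        rw [lp.coeFn_sub, Pi.sub_apply, lp.coeFn_smul, Pi.smul_apply, smul_eq_mul]
      have hR : (lp.single 2 (2*M+1) ((c (2*M+3) : ℂ)) + lp.single 2 (2*M+2) (-(c (2*M+2) : ℂ))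
          : lp (fun _ : ℕ => ℂ) 2) n
          = (if n = 2*M+1 then (c (2*M+3) : ℂ) else 0) +
            (if n = 2*M+2 then (-(c (2*M+2)) : ℂ) else 0) := by
        rw [lp.coeFn_add, Pi.add_apply, single_app, single_app]
      rw [hL, hR, hΔp]
      rcases n with _ | m
      · -- n = 0
        simp only [if_pos rfl, hv]
        have h1 : (1:ℕ) < 2*M+2 := by omega
        have h0 : (0:ℕ) < 2*M+2 := by omega
        rw [if_pos h1, if_pos h0]
        have := hrecC 0
        have hc0 : c 0 = 0 := by simp [hc]
        rw [if_neg (by omega : ¬ (0:ℕ) = 2*M+1), if_neg (by omega : ¬ (0:ℕ) = 2*M+2)]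
        push_cast [hc0] at this ⊢
        linear_combination -this
      · -- n = m+1
        have hne : ¬ (m+1 = 0) := by omega
        rw [if_neg hne]
        have hsub : m + 1 - 1 = m := rfl
        rw [hsub, hv, hv, hv]
        rcases lt_trichotomy (m+1) (2*M+1) with h | h | h
        · rw [if_pos (by omega), if_pos (by omega), if_pos (by omega),
            if_neg (by omega), if_neg (by omega)]
          have h5 := hrecC (m+1)
          have e5 : m+1+2 = m+2+1 := by omega
          rw [e5] at h5
          linear_combination -h5
        · have hm : m = 2*M := by omega
          subst hm
          rw [if_pos (by omega), if_neg (by omega), if_pos (by omega),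
            if_pos rfl, if_neg (by omega)]
          have h5 := hrecC (2*M+1)
          have e5 : 2*M+1+2 = 2*M+3 := by omega
          have e6 : 2*M+1+1 = 2*M+2 := by omega
          rw [e5, e6] at h5
          have e7 : 2*M+1+1 = 2*M+2 := by omega
          rw [e7]
          linear_combination -h5
        · rcases eq_or_lt_of_le (by omega : 2*M+2 ≤ m+1) with h2 | h2
          · have hm : m = 2*M+1 := by omega
            subst hm
            rw [if_neg (by omega), if_neg (by omega), if_pos (by omega),
              if_neg (by omega), if_pos rfl]
            have e7 : 2*M+1+1 = 2*M+2 := by omega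
            rw [e7]
            ring
          · rw [if_neg (by omega), if_neg (by omega), if_neg (by omega),
              if_neg (by omega), if_neg (by omega)]
            ring
    -- norm of error ≤ 2
    have herrnorm : ‖(x:ℂ) • v - Δp v‖ ≤ 2 := by
      rw [herr]
      refine (norm_add_le _ _).trans ?_
      have e1 : ‖lp.single (E := fun _ : ℕ => ℂ) 2 (2*M+1) ((c (2*M+3) : ℂ))‖ = ‖(c (2*M+3) : ℂ)‖ :=
        lp.norm_single (p := 2) (E := fun _ : ℕ => ℂ) (by norm_num) (2*M+1) (c (2*M+3) : ℂ)
      have e2 : ‖lp.single (E := fun _ : ℕ => ℂ) 2 (2*M+2) (-(c (2*M+2) : ℂ))‖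
          = ‖(-(c (2*M+2)) : ℂ)‖ :=
        lp.norm_single (p := 2) (E := fun _ : ℕ => ℂ) (by norm_num) (2*M+2) (-(c (2*M+2)) : ℂ)
      rw [e1, e2, norm_neg]
      linarith [habs (2*M+3), habs (2*M+2)]
    -- norm of v squared
    have hvnorm : ‖v‖ ^ (2:ℝ) = ∑ k ∈ Finset.range (2*M+2), ‖(c (k+1) : ℂ)‖ ^ (2:ℝ) := by
      have := lp.norm_sum_single (p := 2) (E := fun _ : ℕ => ℂ) (by norm_num)
        (fun k => (c (k+1) : ℂ)) (Finset.range (2*M+2))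
      simpa using this
    have hsum : ((M+1:ℕ):ℝ) * δ ≤ ‖v‖ ^ (2:ℝ) := by
      rw [hvnorm]
      have : ∀ k : ℕ, ‖(c (k+1) : ℂ)‖ ^ (2:ℝ) = Real.sin (((k:ℝ)+1)*θ) ^ 2 := by
        intro k
        rw [Complex.norm_real, Real.rpow_two, Real.norm_eq_abs, _root_.sq_abs]
        have e8 : ((k+1:ℕ):ℝ)*θ = ((k:ℝ)+1)*θ := by push_cast; ring
        simp only [hc]
        rw [e8]
      rw [Finset.sum_congr rfl (fun k _ => this k)]
      have := sumLB' θ (M+1)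
      have e : 2*(M+1) = 2*M+2 := by ring
      rw [e] at this
      rw [hδ]
      push_cast at this ⊢
      linarith [this, hδ.ge, hδ.le]
    have hvle : ‖v‖ ≤ 2 * C := by
      calc ‖v‖ ≤ C * ‖(x:ℂ) • v - Δp v‖ := hbound v
      _ ≤ C * 2 := by exact mul_le_mul_of_nonneg_left herrnorm hCnn
      _ = 2 * C := by ring
    have : ‖v‖ ^ (2:ℝ) ≤ (2*C)^2 := by
      rw [Real.rpow_two]
      exact pow_le_pow_left₀ (norm_nonneg _) hvle 2
    nlinarith [hsum, this]
  -- contradiction by Archimedean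
  obtain ⟨M, hM⟩ := exists_nat_gt (4*C^2/δ)
  have := key M
  have hgt : 4*C^2 < ((M+1:ℕ):ℝ) * δ := by
    rw [div_lt_iff₀ hδpos] at hM
    push_cast
    nlinarith [hM, hδpos]
  linarith

theorem spectrum_of_halfline_laplacian_contains_interval
    (Δp : lp (fun _ : ℕ => ℂ) 2 →L[ℂ] lp (fun _ : ℕ => ℂ) 2)
    (hΔp : ∀ (u : lp (fun _ : ℕ => ℂ) 2) (n : ℕ),
      Δp u n = if n = 0 then u 1 else u (n + 1) + u (n - 1)) :
    Complex.ofReal '' Set.Icc (-2 : ℝ) 2 ⊆ spectrum ℂ Δp := by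
  have hIoo : Complex.ofReal '' Set.Ioo (-2 : ℝ) 2 ⊆ spectrum ℂ Δp := by
    rintro z ⟨x, hx, rfl⟩
    exact core_Ioo Δp hΔp x hx
  intro z hz
  obtain ⟨x, hx, rfl⟩ := hz
  have h1 : (x:ℂ) ∈ Complex.ofReal '' closure (Set.Ioo (-2:ℝ) 2) := by
    rw [closure_Ioo (by norm_num : (-2:ℝ) ≠ 2)]
    exact ⟨x, hx, rfl⟩
  have h2 : (x:ℂ) ∈ closure (Complex.ofReal '' Set.Ioo (-2:ℝ) 2) :=
    image_closure_subset_closure_image Complex.continuous_ofReal h1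
  exact closure_minimal hIoo (spectrum.isClosed Δp) h2
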